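/- Fix real numbers λ1* and λ2* with 0 < λ1* < λ2*. Consider the weighted Laplacian on the path graph P3 with vertex measures 2π, 4π, 2π and positive edge weights w12, w23. There exist positive reals w12, w23 such that the non-zero eigenvalues of this Laplacian are λ1* and λ2* if and only if λ2* ≥ 2λ1*. -/
import Mathlib


open Real

/-- The weighted Laplacian on the path graph `P₃` with vertex measures
`2π, 4π, 2π` and positive edge weights `w12, w23`. -/
noncomputable def pathLaplacian (w12 w23 : ℝ) : Matrix (Fin 3) (Fin 3) ℝ :=
  Matrix.of
    ![![w12 / (2 * π), -(w12 / (2 * π)), 0],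
      ![-(w12 / (4 * π)), (w12 + w23) / (4 * π), -(w23 / (4 * π))],
      ![0, -(w23 / (2 * π)), w23 / (2 * π)]]

lemma mem_spec_iff (w12 w23 μ : ℝ) :
    μ ∈ spectrum ℝ (pathLaplacian w12 w23) ↔
      μ * (μ^2 - 3 * (w12 + w23) / (4 * π) * μ + w12 * w23 / (2 * π^2)) = 0 := by
  have hπ : (π : ℝ) ≠ 0 := Real.pi_ne_zero
  rw [spectrum.mem_iff, Matrix.isUnit_iff_isUnit_det, isUnit_iff_ne_zero, not_not]
  have : ((algebraMap ℝ (Matrix (Fin 3) (Fin 3) ℝ)) μ - pathLaplacian w12 w23).det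
      = μ * (μ^2 - 3 * (w12 + w23) / (4 * π) * μ + w12 * w23 / (2 * π^2)) := by
    simp [Matrix.det_fin_three, pathLaplacian, Matrix.algebraMap_eq_diagonal,
      Matrix.diagonal_apply, Matrix.sub_apply]
    field_simp
    ring
  rw [this]


/-- For `0 < λ₁* < λ₂*`, there exist positive edge weights `w12, w23` such that
the weighted `P₃` Laplacian has eigenvalues exactly `0, λ₁*, λ₂*` if and only if
`λ₂* ≥ 2 λ₁*`. -/
theorem stmt2 (lam1 lam2 : ℝ) (h1 : 0 < lam1) (h12 : lam1 < lam2) :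
    (∃ w12 w23 : ℝ, 0 < w12 ∧ 0 < w23 ∧
      spectrum ℝ (pathLaplacian w12 w23) = {0, lam1, lam2}) ↔ 2 * lam1 ≤ lam2 := by
  have hπ : (0:ℝ) < π := Real.pi_pos
  have hπ' : (π:ℝ) ≠ 0 := ne_of_gt hπ
  have h2 : 0 < lam2 := h1.trans h12
  constructor
  · rintro ⟨w12, w23, hw1, hw2, hspec⟩
    have hm1 : lam1 ∈ spectrum ℝ (pathLaplacian w12 w23) := by rw [hspec]; simp
    have hm2 : lam2 ∈ spectrum ℝ (pathLaplacian w12 w23) := by rw [hspec]; simp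
    rw [mem_spec_iff] at hm1 hm2
    have hq1 : lam1^2 - 3 * (w12 + w23) / (4 * π) * lam1 + w12 * w23 / (2 * π^2) = 0 :=
      (mul_eq_zero.mp hm1).resolve_left (ne_of_gt h1)
    have hq2 : lam2^2 - 3 * (w12 + w23) / (4 * π) * lam2 + w12 * w23 / (2 * π^2) = 0 :=
      (mul_eq_zero.mp hm2).resolve_left (ne_of_gt h2)
    have hTs : 3 * (w12 + w23) / (4 * π) = lam1 + lam2 := by
      have hne : lam1 - lam2 ≠ 0 := by intro h; linarith [sub_eq_zero.mp h]
      have hmul : (lam1 - lam2) * (lam1 + lam2 - 3 * (w12 + w23) / (4 * π)) = 0 := by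
        nlinarith [hq1, hq2]
      have := (mul_eq_zero.mp hmul).resolve_left hne
      linarith
    have hPp : w12 * w23 / (2 * π^2) = lam1 * lam2 := by nlinarith [hq1, hTs]
    have hsum : w12 + w23 = 4 * π * (lam1 + lam2) / 3 := by
      field_simp at hTs; linarith
    have hprod : w12 * w23 = 2 * π^2 * (lam1 * lam2) := by
      field_simp at hPp; linarith
    -- (w12 - w23)^2 ≥ 0 gives 2(lam1+lam2)^2 ≥ 9 lam1 lam2
    have h9 : 0 ≤ π^2 * (2 * (lam1 + lam2)^2 - 9 * (lam1 * lam2)) := by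
      nlinarith [sq_nonneg (w12 - w23)]
    have hkey : 0 ≤ 2 * (lam1 + lam2)^2 - 9 * (lam1 * lam2) := by
      by_contra h
      push_neg at h
      nlinarith [mul_pos (mul_pos hπ hπ) (show 0 < 9 * (lam1*lam2) - 2*(lam1+lam2)^2 by linarith)]
    by_contra hc
    push_neg at hc
    nlinarith [mul_pos (show 0 < 2*lam1 - lam2 by linarith) (show 0 < 2*lam2 - lam1 by linarith)]
  · intro hle
    have hp : 0 < lam1 * lam2 := mul_pos h1 h2
    have hkey : 0 ≤ 2 * (lam1 + lam2)^2 - 9 * (lam1 * lam2) := by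
      nlinarith [mul_nonneg (show 0 ≤ lam2 - 2*lam1 by linarith) (show 0 ≤ 2*lam2 - lam1 by linarith)]
    have hDnn : 0 ≤ (4 * π * (lam1 + lam2) / 3)^2 - 8 * π^2 * (lam1 * lam2) := by
      nlinarith [mul_nonneg (sq_nonneg π) hkey]
    set r := Real.sqrt ((4 * π * (lam1 + lam2) / 3)^2 - 8 * π^2 * (lam1 * lam2)) with hr
    have hr2 : r^2 = (4 * π * (lam1 + lam2) / 3)^2 - 8 * π^2 * (lam1 * lam2) :=
      Real.sq_sqrt hDnn
    have hrnn : 0 ≤ r := Real.sqrt_nonneg _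
    have hX : 0 < 4 * π * (lam1 + lam2) / 3 := by
      have := mul_pos hπ (show 0 < lam1 + lam2 by linarith)
      linarith
    have hrlt : r < 4 * π * (lam1 + lam2) / 3 := by
      by_contra h
      push_neg at h
      nlinarith [mul_le_mul h h (le_of_lt hX) hrnn, mul_pos (mul_pos hπ hπ) hp]
    refine ⟨(4 * π * (lam1 + lam2) / 3 + r) / 2, (4 * π * (lam1 + lam2) / 3 - r) / 2,
      by linarith, by linarith, ?_⟩
    have hsum : (4 * π * (lam1 + lam2) / 3 + r) / 2 + (4 * π * (lam1 + lam2) / 3 - r) / 2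
        = 4 * π * (lam1 + lam2) / 3 := by ring
    have hprod : (4 * π * (lam1 + lam2) / 3 + r) / 2 * ((4 * π * (lam1 + lam2) / 3 - r) / 2)
        = 2 * π^2 * (lam1 * lam2) := by
      have e : (4 * π * (lam1 + lam2) / 3 + r) / 2 * ((4 * π * (lam1 + lam2) / 3 - r) / 2)
          = ((4 * π * (lam1 + lam2) / 3)^2 - r^2) / 4 := by ring
      rw [e, hr2]; ring
    ext μ
    rw [mem_spec_iff, hsum, hprod]
    have hfac : μ * (μ^2 - 3 * (4 * π * (lam1 + lam2) / 3) / (4 * π) * μ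
        + 2 * π^2 * (lam1 * lam2) / (2 * π^2))
        = μ * ((μ - lam1) * (μ - lam2)) := by
      have e1 : 3 * (4 * π * (lam1 + lam2) / 3) / (4 * π) = lam1 + lam2 := by
        field_simp
      have e2 : 2 * π^2 * (lam1 * lam2) / (2 * π^2) = lam1 * lam2 := by
        field_simp
      rw [e1, e2]; ring
    rw [hfac]
    simp only [Set.mem_insert_iff, Set.mem_singleton_iff, mul_eq_zero, sub_eq_zero]
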